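/- Assume M is finite-dimensional over K and the polar bilinear form of Q is nondegenerate. Let B ∈ Cl(Q) be an invertible versor (an invertible element of the submonoid of Cl(Q) generated by the image of ι) and let W ∈ Cl(Q) be invertible. Suppose that for every vector x ∈ M, α(B)·ι(x)·B⁻¹ = α(W)·ι(x)·W⁻¹. Then there exists a scalar c ∈ K such that W = algebraMap K Cl(Q) c · B; in particular W is itself an invertible versor. -/

import Mathlib

open CliffordAlgebra Pointwise

section Core

variable {K M : Type*} [Field K] [Invertible (2 : K)] [AddCommGroup M] [Module K M]
  [FiniteDimensional K M] {Q : QuadraticForm K M}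

namespace VersorAux

set_option linter.unusedSectionVars false

variable (Q) in
/-- The monomial associated to a list of indices, given a family of vectors. -/
noncomputable def mon {n : ℕ} (e : Fin n → M) (l : List (Fin n)) : CliffordAlgebra Q :=
  (l.map fun i => ι Q (e i)).prod

theorem mon_nil {n : ℕ} (e : Fin n → M) : mon Q e ([] : List (Fin n)) = 1 := rfl

theorem mon_cons {n : ℕ} (e : Fin n → M) (j : Fin n) (t : List (Fin n)) :
    mon Q e (j :: t) = ι Q (e j) * mon Q e t := by
  simp [mon]

theorem mon_append {n : ℕ} (e : Fin n → M) (l l' : List (Fin n)) :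
    mon Q e (l ++ l') = mon Q e l * mon Q e l' := by
  simp [mon]

theorem mon_singleton {n : ℕ} (e : Fin n → M) (i : Fin n) :
    mon Q e [i] = ι Q (e i) := by
  simp [mon]

/-- Monomials in a basis span the Clifford algebra. -/
theorem span_mon {n : ℕ} (e : Module.Basis (Fin n) K M) (x : CliffordAlgebra Q) :
    x ∈ Submodule.span K (Set.range (mon Q e)) := by
  induction x using CliffordAlgebra.induction with
  | algebraMap r =>
    rw [Algebra.algebraMap_eq_smul_one]
    exact Submodule.smul_mem _ _ (Submodule.subset_span ⟨[], rfl⟩)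
  | ι x =>
    have hx : ι Q x = ∑ i, e.repr x i • mon Q e [i] := by
      simp_rw [mon_singleton, ← map_smul, ← map_sum, Module.Basis.sum_repr]
    rw [hx]
    exact Submodule.sum_mem _ fun i _ =>
      Submodule.smul_mem _ _ (Submodule.subset_span ⟨[i], rfl⟩)
  | mul a b ha hb =>
    have hmul : Set.range (mon Q e) * Set.range (mon Q e) ⊆ Set.range (mon Q e) := by
      rintro _ ⟨_, ⟨l, rfl⟩, _, ⟨l', rfl⟩, rfl⟩
      exact ⟨l ++ l', by simp [mon_append (Q := Q)]⟩
    have hab := Submodule.mul_mem_mul ha hb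
    rw [Submodule.span_mul_span] at hab
    exact Submodule.span_mono hmul hab
  | add a b ha hb => exact Submodule.add_mem _ ha hb

theorem anticomm {n : ℕ} {e : Fin n → M}
    (horth : ∀ i j : Fin n, i ≠ j → QuadraticMap.polar Q (e i) (e j) = 0)
    {i j : Fin n} (hij : i ≠ j) :
    ι Q (e i) * ι Q (e j) = -(ι Q (e j) * ι Q (e i)) := by
  have h := ι_mul_ι_add_swap (Q := Q) (e i) (e j)
  rw [horth i j hij, map_zero] at h
  exact eq_neg_of_add_eq_zero_left h

/-- Moving a basis vector past a monomial, with sign given by the number of entries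
different from `j`. -/
theorem mul_mon_eq {n : ℕ} {e : Fin n → M}
    (horth : ∀ i j : Fin n, i ≠ j → QuadraticMap.polar Q (e i) (e j) = 0)
    (j : Fin n) (t : List (Fin n)) :
    ι Q (e j) * mon Q e t = ((-1 : K) ^ (t.countP (· ≠ j))) • (mon Q e t * ι Q (e j)) := by
  induction t with
  | nil => simp [mon_nil]
  | cons k t ih =>
    by_cases hkj : k = j
    · subst hkj
      have hcp : List.countP (fun x => x ≠ k) (k :: t) = List.countP (fun x => x ≠ k) t := by
        simp [List.countP_cons]
      rw [hcp, mon_cons]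
      set c := List.countP (fun x => x ≠ k) t with hc
      have hsq : ((-1 : K) ^ c) * ((-1 : K) ^ c) = 1 := by
        rw [← pow_add]
        exact Even.neg_one_pow ⟨c, rfl⟩
      have ih' : ((-1 : K) ^ c) • (ι Q (e k) * mon Q e t) = mon Q e t * ι Q (e k) := by
        rw [ih, smul_smul, hsq, one_smul]
      rw [mul_assoc, ← ih', mul_smul_comm, smul_smul, hsq, one_smul]
    · have h1 : ι Q (e j) * ι Q (e k) = -(ι Q (e k) * ι Q (e j)) :=
        anticomm horth fun h => hkj h.symm
      have hcp : List.countP (fun x => x ≠ j) (k :: t) =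
          List.countP (fun x => x ≠ j) t + 1 := by
        simp [List.countP_cons, hkj]
      rw [hcp, mon_cons, pow_succ]
      calc ι Q (e j) * (ι Q (e k) * mon Q e t)
          = (ι Q (e j) * ι Q (e k)) * mon Q e t := by rw [mul_assoc]
        _ = -(ι Q (e k) * (ι Q (e j) * mon Q e t)) := by rw [h1, neg_mul, mul_assoc]
        _ = -(ι Q (e k) * (((-1 : K) ^ (t.countP (· ≠ j))) • (mon Q e t * ι Q (e j)))) := by
            rw [ih]
        _ = ((-1 : K) ^ (t.countP (· ≠ j)) * -1) • (ι Q (e k) * mon Q e t * ι Q (e j)) := by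
            rw [mul_smul_comm, mul_neg_one, neg_smul, mul_assoc]

/-- A monomial in orthogonal basis vectors in which every index appears an
even number of times is a scalar. -/
theorem even_counts_scalar {n : ℕ} {e : Fin n → M}
    (horth : ∀ i j : Fin n, i ≠ j → QuadraticMap.polar Q (e i) (e j) = 0) :
    ∀ (N : ℕ) (l : List (Fin n)), l.length ≤ N → (∀ i, Even (l.count i)) →
      ∃ c : K, mon Q e l = algebraMap K (CliffordAlgebra Q) c := by
  intro N
  induction N with
  | zero =>
    intro l hl _
    rw [Nat.le_zero, List.length_eq_zero_iff] at hl
    subst hl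
    exact ⟨1, by simp [mon_nil]⟩
  | succ N ih =>
    intro l hl hcount
    cases l with
    | nil => exact ⟨1, by simp [mon_nil]⟩
    | cons j t =>
      have hjt : j ∈ t := by
        by_contra hj
        have h0 : t.count j = 0 := List.count_eq_zero.2 hj
        have hcj := hcount j
        rw [List.count_cons_self, h0] at hcj
        exact Nat.not_even_iff_odd.2 odd_one (by simpa using hcj)
      obtain ⟨t₁, t₂, rfl⟩ := List.append_of_mem hjt
      have key : mon Q e (j :: (t₁ ++ j :: t₂)) =
          (((-1 : K) ^ (t₁.countP (· ≠ j))) * Q (e j)) • mon Q e (t₁ ++ t₂) := by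
        calc mon Q e (j :: (t₁ ++ j :: t₂))
            = ι Q (e j) * mon Q e t₁ * (ι Q (e j) * mon Q e t₂) := by
              rw [mon_cons, mon_append, mon_cons, ← mul_assoc]
          _ = ((-1 : K) ^ (t₁.countP (· ≠ j))) •
                (mon Q e t₁ * ι Q (e j) * (ι Q (e j) * mon Q e t₂)) := by
              rw [mul_mon_eq horth j t₁, smul_mul_assoc]
          _ = ((-1 : K) ^ (t₁.countP (· ≠ j))) •
                (mon Q e t₁ * (algebraMap K (CliffordAlgebra Q) (Q (e j)) * mon Q e t₂)) := by
              rw [mul_assoc (mon Q e t₁), ← mul_assoc (ι Q (e j)) (ι Q (e j)), ι_sq_scalar]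
          _ = (((-1 : K) ^ (t₁.countP (· ≠ j))) * Q (e j)) • mon Q e (t₁ ++ t₂) := by
              rw [← Algebra.smul_def, mul_smul_comm, smul_smul, mon_append]
      have hlen : (t₁ ++ t₂).length ≤ N := by
        simp only [List.length_cons, List.length_append] at hl ⊢
        omega
      have hcount' : ∀ i, Even ((t₁ ++ t₂).count i) := by
        intro i
        have hc := hcount i
        by_cases hij : i = j
        · subst hij
          simp only [List.count_cons_self, List.count_append] at hc ⊢
          obtain ⟨m, hm⟩ := hc
          exact ⟨m - 1, by omega⟩
        · simp only [List.count_cons_of_ne (Ne.symm hij), List.count_append] at hc ⊢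
          exact hc
      obtain ⟨c, hc⟩ := ih (t₁ ++ t₂) hlen hcount'
      refine ⟨((-1 : K) ^ (t₁.countP (· ≠ j))) * Q (e j) * c, ?_⟩
      rw [key, hc, Algebra.smul_def, ← map_mul, mul_assoc]

variable (Q) in
/-- Twisted conjugation by a basis vector, as a linear map. -/
noncomputable def sigma {n : ℕ} (e : Fin n → M) (j : Fin n) :
    CliffordAlgebra Q →ₗ[K] CliffordAlgebra Q :=
  (Q (e j))⁻¹ • (LinearMap.mulRight K (ι Q (e j)) ∘ₗ LinearMap.mulLeft K (ι Q (e j)) ∘ₗ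
    (involute (Q := Q)).toLinearMap)

theorem sigma_apply {n : ℕ} (e : Fin n → M) (j : Fin n) (x : CliffordAlgebra Q) :
    sigma Q e j x = (Q (e j))⁻¹ • (ι Q (e j) * involute x * ι Q (e j)) := by
  simp [sigma]

theorem sigma_mon {n : ℕ} {e : Fin n → M}
    (horth : ∀ i j : Fin n, i ≠ j → QuadraticMap.polar Q (e i) (e j) = 0)
    (hq : ∀ i, Q (e i) ≠ 0) (j : Fin n) (l : List (Fin n)) :
    sigma Q e j (mon Q e l) = ((-1 : K) ^ (l.count j)) • mon Q e l := by
  have hlen : ∀ l' : List (Fin n), l'.length = l'.count j + l'.countP (· ≠ j) := by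
    intro l'
    induction l' with
    | nil => rfl
    | cons k t iht =>
      by_cases hkj : k = j
      · subst hkj
        simp only [List.length_cons, List.count_cons_self, List.countP_cons]
        simp [iht]
        omega
      · simp only [List.length_cons, List.count_cons_of_ne (fun h => hkj h.symm),
          List.countP_cons]
        simp [hkj, iht]
        omega
  have hinv : involute (mon Q e l) = ((-1 : K) ^ l.length) • mon Q e l := by
    have h := involute_prod_map_ι (Q := Q) (l.map e)
    simpa [mon, List.map_map, Function.comp_def] using h
  have h1 : ι Q (e j) * mon Q e l * ι Q (e j) =
      ((-1 : K) ^ (l.countP (· ≠ j)) * Q (e j)) • mon Q e l := by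
    rw [mul_mon_eq horth j l, smul_mul_assoc, mul_assoc, ι_sq_scalar,
      ← Algebra.commutes, ← Algebra.smul_def, smul_smul]
  rw [sigma_apply, hinv, mul_smul_comm, smul_mul_assoc, h1, smul_smul, smul_smul]
  congr 1
  rw [hlen l, pow_add]
  have hq' : (Q (e j))⁻¹ * Q (e j) = 1 := inv_mul_cancel₀ (hq j)
  have hsq : ((-1 : K) ^ (l.countP (· ≠ j))) * ((-1 : K) ^ (l.countP (· ≠ j))) = 1 := by
    rw [← pow_add]; exact Even.neg_one_pow ⟨_, rfl⟩
  linear_combination ((-1 : K) ^ l.count j * (Q (e j))⁻¹ * Q (e j)) * hsq +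
    ((-1 : K) ^ l.count j) * hq'

/-- The core lemma: an element of the Clifford algebra of a nondegenerate form which
twisted-commutes with every vector is a scalar. -/
theorem twisted_central_scalar
    (hQ : (QuadraticMap.polarBilin Q).Nondegenerate)
    (u : CliffordAlgebra Q)
    (H : ∀ x : M, ι Q x * u = involute u * ι Q x) :
    ∃ c : K, u = algebraMap K (CliffordAlgebra Q) c := by
  -- derived identity
  have H' : ∀ x : M, ι Q x * involute u = u * ι Q x := by
    intro x
    have h2 := congrArg involute (H x)
    simp only [map_mul, involute_ι, involute_involute, neg_mul, mul_neg] at h2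
    exact neg_injective h2
  -- orthogonal basis
  obtain ⟨e, he⟩ := LinearMap.BilinForm.exists_orthogonal_basis
    (B := QuadraticMap.polarBilin Q) (LinearMap.isSymm_def.2 fun x y => by
      simp [QuadraticMap.polarBilin_apply_apply, QuadraticMap.polar_comm])
  have horth : ∀ i j, i ≠ j → QuadraticMap.polar Q (e i) (e j) = 0 := fun i j hij => he hij
  have hq : ∀ i, Q (e i) ≠ 0 := by
    intro i hQei
    have hzero : QuadraticMap.polarBilin Q (e i) = 0 := by
      refine e.ext fun j => ?_
      by_cases hij : i = j
      · subst hij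
        simp [QuadraticMap.polarBilin_apply_apply, QuadraticMap.polar_self, hQei]
      · simpa [QuadraticMap.polarBilin_apply_apply] using horth i j hij
    have h0 := hQ.1 (e i) (fun y => by rw [hzero]; rfl)
    exact e.ne_zero i h0
  -- sigma fixes u
  have hsig_u : ∀ j, sigma Q e j u = u := by
    intro j
    rw [sigma_apply, H' (e j), mul_assoc, ι_sq_scalar, ← Algebra.commutes,
      ← Algebra.smul_def, smul_smul, inv_mul_cancel₀ (hq j), one_smul]
  -- averaging operators
  set avg : Fin (Module.finrank K M) → CliffordAlgebra Q →ₗ[K] CliffordAlgebra Q :=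
    fun j => (⅟(2 : K)) • (LinearMap.id + sigma Q e j) with havg
  have avg_fix : ∀ j (x : CliffordAlgebra Q), sigma Q e j x = x → avg j x = x := by
    intro j x hx
    simp only [havg, LinearMap.smul_apply, LinearMap.add_apply, LinearMap.id_apply, hx]
    rw [← two_smul K x, smul_smul, invOf_mul_self, one_smul]
  have avg_mon : ∀ j l, avg j (mon Q e l) =
      if Even (l.count j) then mon Q e l else 0 := by
    intro j l
    simp only [havg, LinearMap.smul_apply, LinearMap.add_apply, LinearMap.id_apply,
      sigma_mon horth hq]
    by_cases hev : Even (l.count j)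
    · rw [if_pos hev, Even.neg_one_pow hev, one_smul, ← two_smul K, smul_smul,
        invOf_mul_self, one_smul]
    · rw [if_neg hev, Odd.neg_one_pow (Nat.not_even_iff_odd.1 hev), neg_one_smul,
        add_neg_cancel, smul_zero]
  -- the composite over all indices
  set A : CliffordAlgebra Q →ₗ[K] CliffordAlgebra Q :=
    (List.finRange (Module.finrank K M)).foldr (fun j f => (avg j) ∘ₗ f) LinearMap.id with hA
  have foldr_fix : ∀ L : List (Fin (Module.finrank K M)),
      (L.foldr (fun j f => (avg j) ∘ₗ f) LinearMap.id) u = u := by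
    intro L
    induction L with
    | nil => rfl
    | cons j L ihL =>
      simp only [List.foldr_cons, LinearMap.comp_apply, ihL, avg_fix j u (hsig_u j)]
  have foldr_mon : ∀ (L : List (Fin (Module.finrank K M))) (l : List (Fin (Module.finrank K M))),
      (L.foldr (fun j f => (avg j) ∘ₗ f) LinearMap.id) (mon Q e l) =
        if ∀ j ∈ L, Even (l.count j) then mon Q e l else 0 := by
    intro L l
    induction L with
    | nil => simp
    | cons j L ihL =>
      simp only [List.foldr_cons, LinearMap.comp_apply, ihL]
      by_cases hall : ∀ k ∈ L, Even (l.count k)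
      · rw [if_pos hall, avg_mon]
        by_cases hev : Even (l.count j)
        · rw [if_pos hev, if_pos]
          intro k hk
          rcases List.mem_cons.1 hk with rfl | hk
          · exact hev
          · exact hall k hk
        · rw [if_neg hev, if_neg]
          intro hcon
          exact hev (hcon j (List.mem_cons_self (a := j) (l := L)))
      · rw [if_neg hall, map_zero, if_neg]
        intro hcon
        exact hall fun k hk => hcon k (List.mem_cons.2 (Or.inr hk))
  -- A maps everything into the scalars
  have hA_mon : ∀ l, A (mon Q e l) ∈ Submodule.span K ({1} : Set (CliffordAlgebra Q)) := by
    intro l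
    rw [hA, foldr_mon]
    by_cases hall : ∀ j ∈ List.finRange (Module.finrank K M), Even (l.count j)
    · rw [if_pos hall]
      obtain ⟨c, hc⟩ := even_counts_scalar horth l.length l le_rfl
        (fun i => hall i (List.mem_finRange i))
      rw [hc, Algebra.algebraMap_eq_smul_one]
      exact Submodule.smul_mem _ _ (Submodule.mem_span_singleton_self 1)
    · rw [if_neg hall]
      exact Submodule.zero_mem _
  have hA_span : ∀ x : CliffordAlgebra Q, x ∈ Submodule.span K (Set.range (mon Q e)) →
      A x ∈ Submodule.span K ({1} : Set (CliffordAlgebra Q)) := by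
    intro x hx
    induction hx using Submodule.span_induction with
    | mem y hy => obtain ⟨l, rfl⟩ := hy; exact hA_mon l
    | zero => rw [map_zero]; exact Submodule.zero_mem _
    | add y z _ _ hy hz => rw [map_add]; exact Submodule.add_mem _ hy hz
    | smul c y _ hy => rw [map_smul]; exact Submodule.smul_mem _ _ hy
  have hAu := hA_span u (span_mon e u)
  rw [hA, foldr_fix] at hAu
  obtain ⟨c, hc⟩ := Submodule.mem_span_singleton.1 hAu
  exact ⟨c, by rw [← hc, Algebra.algebraMap_eq_smul_one]⟩

end VersorAux

end Core

/-- Over a finite-dimensional space with nondegenerate polar form: if `W` is invertible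
and its twisted conjugation agrees on all vectors with that of an invertible versor `B`,
then `W` is a scalar multiple of `B` (in particular `W` is itself an invertible versor). -/
theorem exists_scalar_eq_of_conj_eq {K M : Type*} [Field K]
    [Invertible (2 : K)] [AddCommGroup M] [Module K M] [FiniteDimensional K M]
    {Q : QuadraticForm K M}
    (hQ : (QuadraticMap.polarBilin Q).Nondegenerate)
    (B : CliffordAlgebra Q) [Invertible B]
    (hB : B ∈ Submonoid.closure (Set.range (ι Q)))
    (W : CliffordAlgebra Q) [Invertible W]
    (h : ∀ x : M, involute B * ι Q x * ⅟B = involute W * ι Q x * ⅟W) :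
    ∃ c : K, W = algebraMap K (CliffordAlgebra Q) c * B := by
  have HU : ∀ x : M, ι Q x * (⅟B * W) = involute (⅟B * W) * ι Q x := by
    intro x
    have h2 := congrArg (· * W) (h x)
    rw [mul_assoc (involute W * ι Q x), invOf_mul_self, mul_one] at h2
    have h1 : involute B * (ι Q x * ⅟B * W) = involute W * ι Q x := by
      simp only [← mul_assoc]
      exact h2
    have hBinv : involute (⅟B) * involute B = 1 := by
      rw [← map_mul, invOf_mul_self, map_one]
    calc ι Q x * (⅟B * W)
        = involute (⅟B) * involute B * (ι Q x * ⅟B * W) := by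
          rw [hBinv, one_mul, ← mul_assoc]
      _ = involute (⅟B) * (involute W * ι Q x) := by rw [mul_assoc, h1]
      _ = involute (⅟B * W) * ι Q x := by rw [map_mul, mul_assoc]
  obtain ⟨c, hc⟩ := VersorAux.twisted_central_scalar hQ (⅟B * W) HU
  refine ⟨c, ?_⟩
  calc W = B * (⅟B * W) := by rw [← mul_assoc, mul_invOf_self, one_mul]
    _ = B * algebraMap K (CliffordAlgebra Q) c := by rw [hc]
    _ = algebraMap K (CliffordAlgebra Q) c * B := (Algebra.commutes c B).symm
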